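/- A graph G is a partial cube (i.e., admits an isometric embedding into a hypercube) if and only if G is bipartite and for every edge uv the sets W(u,v) = {x : d(x,u) < d(x,v)} and W(v,u) are convex. -/

import Mathlib

open Finset
open scoped Classical

variable {U : Type*}

/-- Hamming distance between two vertices of the hypercube `U → Bool`. -/
def hDist [Fintype U] [DecidableEq U] (x y : U → Bool) : ℕ :=
  (Finset.univ.filter fun i => x i ≠ y i).card

/-- The hypercube graph on `U → Bool`: two vertices are adjacent iff they differ
in exactly one coordinate. -/
def cubeGraph (U : Type*) [Fintype U] [DecidableEq U] : SimpleGraph (U → Bool) where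
  Adj x y := hDist x y = 1
  symm := by
    constructor
    intro x y h
    have hs : (Finset.univ.filter fun i => y i ≠ x i) =
        (Finset.univ.filter fun i => x i ≠ y i) := by
      apply Finset.filter_congr
      intro i _
      exact ne_comm
    simpa [hDist, hs] using h
  loopless := by
    constructor
    intro x h
    simp [hDist] at h

/-- Distance between `x` and `y` inside the subgraph of the hypercube induced by `A`
(`0` if one of them is not in `A`). -/
noncomputable def dIn [Fintype U] [DecidableEq U] (A : Set (U → Bool)) (x y : U → Bool) : ℕ :=
  if h : x ∈ A ∧ y ∈ A then ((cubeGraph U).induce A).dist ⟨x, h.1⟩ ⟨y, h.2⟩ else 0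

/-- A set of vertices of the hypercube is a partial cube if its induced graph is connected
and the induced graph distance coincides with the Hamming distance
(i.e. it is an isometric subgraph of the hypercube). -/
def IsPartialCube [Fintype U] [DecidableEq U] (A : Set (U → Bool)) : Prop :=
  ((cubeGraph U).induce A).Connected ∧ ∀ x ∈ A, ∀ y ∈ A, dIn A x y = hDist x y

/-- `A` shatters the coordinate set `X`. -/
def Shatters [Fintype U] [DecidableEq U] (A : Set (U → Bool)) (X : Finset U) : Prop :=
  ∀ g : U → Bool, ∃ a ∈ A, ∀ i ∈ X, a i = g i

/-- `A` strongly shatters `X`: it contains a full subcube over the coordinates `X`. -/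
def StronglyShatters [Fintype U] [DecidableEq U] (A : Set (U → Bool)) (X : Finset U) : Prop :=
  ∃ a : U → Bool, ∀ g : U → Bool, (fun i => if i ∈ X then g i else a i) ∈ A

/-- An ample set family: every shattered set is strongly shattered. -/
def IsAmple [Fintype U] [DecidableEq U] (A : Set (U → Bool)) : Prop :=
  ∀ X : Finset U, Shatters A X → StronglyShatters A X

variable {V : Type*}

/-- `W(u,v)`: the vertices strictly closer to `u` than to `v`. -/
def Wside (G : SimpleGraph V) (u v : V) : Set V := {x | G.dist x u < G.dist x v}

/-- A set of vertices is convex if it contains every vertex lying on a shortest path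
between two of its members. -/
def GraphConvex (G : SimpleGraph V) (S : Set V) : Prop :=
  ∀ x ∈ S, ∀ y ∈ S, ∀ z : V, G.dist x z + G.dist z y = G.dist x y → z ∈ S

section DjokovicAux
open SimpleGraph

variable {G : SimpleGraph V}

private lemma zmod2_ne_iff {a b : ZMod 2} : a ≠ b ↔ a = b + 1 := by revert a b; decide

private lemma walk_parity (c : V → ZMod 2) (hcol : ∀ ⦃u v : V⦄, G.Adj u v → c u ≠ c v)
    {x y : V} (p : G.Walk x y) : c x = c y + p.length := by
  induction p with
  | nil => simp
  | cons h q ih =>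
      have h1 := zmod2_ne_iff.mp (hcol h)
      rw [Walk.length_cons]
      push_cast
      rw [h1, ih]; ring

private lemma dist_parity (hc : G.Connected) (c : V → ZMod 2)
    (hcol : ∀ ⦃u v : V⦄, G.Adj u v → c u ≠ c v) (x y : V) :
    c x = c y + (G.dist x y : ZMod 2) := by
  obtain ⟨p, hp⟩ := hc.exists_walk_length_eq_dist x y
  have := walk_parity c hcol p
  rwa [hp] at this

private lemma dist_ne (hc : G.Connected) (hcol : G.Colorable 2) {u v : V} (huv : G.Adj u v)
    (x : V) : G.dist x u ≠ G.dist x v := by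
  obtain ⟨C⟩ := hcol
  have hinj : ∀ a b : Fin 2, ((a.val : ZMod 2) = (b.val : ZMod 2)) → a = b := by decide
  set c : V → ZMod 2 := fun w => ((C w).val : ZMod 2) with hcdef
  have hadj : ∀ ⦃a b : V⦄, G.Adj a b → c a ≠ c b := fun a b h hel => C.valid h (hinj _ _ hel)
  intro heq
  have h1 := dist_parity hc c hadj x u
  have h2 := dist_parity hc c hadj x v
  rw [heq, h2] at h1
  exact hadj huv (add_right_cancel h1.symm)

private lemma dist_succ (hc : G.Connected) {u v : V} (huv : G.Adj u v) {x : V}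
    (hx : x ∈ Wside G u v) : G.dist x v = G.dist x u + 1 := by
  have h1 : G.dist x v ≤ G.dist x u + G.dist u v := hc.dist_triangle
  have h2 : G.dist u v = 1 := dist_eq_one_iff_adj.mpr huv
  have h3 : G.dist x u < G.dist x v := hx
  omega

private lemma wside_total (hc : G.Connected) (hcol : G.Colorable 2) {u v : V}
    (huv : G.Adj u v) (x : V) : x ∈ Wside G u v ∨ x ∈ Wside G v u := by
  have h := dist_ne hc hcol huv x
  rcases lt_or_gt_of_ne h with h' | h'
  · exact Or.inl h'
  · exact Or.inr h'

private lemma mem_wside_self (hc : G.Connected) {u v : V} (huv : G.Adj u v) :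
    u ∈ Wside G u v := by
  show G.dist u u < G.dist u v
  rw [dist_self]
  exact hc.pos_dist_of_ne huv.ne

private lemma wside_disj {u v x : V} (h : x ∈ Wside G u v) : x ∉ Wside G v u := by
  intro h'
  have h1 : G.dist x u < G.dist x v := h
  have h2 : G.dist x v < G.dist x u := h'
  omega

private lemma key (hc : G.Connected) (hcol : G.Colorable 2)
    (hconv : ∀ u v : V, G.Adj u v → GraphConvex G (Wside G u v) ∧ GraphConvex G (Wside G v u))
    {u v z y : V} (huv : G.Adj u v) (hzy : G.Adj z y)
    (hz : z ∈ Wside G u v) (hy : y ∉ Wside G u v) : Wside G u v = Wside G z y := by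
  have hyvu : y ∈ Wside G v u := (wside_total hc hcol huv y).resolve_left hy
  have hone : G.dist z y = 1 := dist_eq_one_iff_adj.mpr hzy
  ext w
  constructor
  · intro hw
    rcases wside_total hc hcol hzy w with h | h
    · exact h
    · exfalso
      have hsucc : G.dist w z = G.dist w y + 1 := dist_succ hc hzy.symm h
      have hgeo : G.dist w y + G.dist y z = G.dist w z := by
        rw [SimpleGraph.dist_comm (u := y) (v := z), hone]; omega
      exact hy ((hconv u v huv).1 w hw z hz y hgeo)
  · intro hw
    by_contra hwn
    have hwvu : w ∈ Wside G v u := (wside_total hc hcol huv w).resolve_left hwn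
    have hsucc : G.dist w y = G.dist w z + 1 := dist_succ hc hzy hw
    have hgeo : G.dist w z + G.dist z y = G.dist w y := by rw [hone]; omega
    exact wside_disj hz ((hconv u v huv).2 w hwvu y hyvu z hgeo)

private lemma exists_penult (hc : G.Connected) {x y : V} {n : ℕ} (h : G.dist x y = n + 1) :
    ∃ z, G.Adj z y ∧ G.dist x z = n := by
  obtain ⟨p, hp⟩ := hc.exists_walk_length_eq_dist x y
  have hp' : p.reverse.length = n + 1 := by rw [Walk.length_reverse, hp, h]
  obtain ⟨z, hadj, q, hql⟩ : ∃ z, ∃ _ : G.Adj y z, ∃ q : G.Walk z x, q.length = n := by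
    cases hw : p.reverse with
    | nil => rw [hw] at hp'; simp at hp'
    | cons h' q =>
        refine ⟨_, h', q, ?_⟩
        rw [hw] at hp'
        simpa using hp'
  refine ⟨z, hadj.symm, ?_⟩
  have h1 : G.dist x z ≤ n := by
    have := dist_le q.reverse
    rwa [Walk.length_reverse, hql] at this
  have h2 : G.dist x y ≤ G.dist x z + G.dist z y := hc.dist_triangle
  have h3 : G.dist z y = 1 := dist_eq_one_iff_adj.mpr hadj.symm
  omega

private abbrev WFam (G : SimpleGraph V) (b : V) : Type _ :=
  {S : Set V // b ∈ S ∧ ∃ u v, G.Adj u v ∧ S = Wside G u v}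

private lemma count_sep [Fintype V] (hc : G.Connected) (hcol : G.Colorable 2)
    (hconv : ∀ u v : V, G.Adj u v → GraphConvex G (Wside G u v) ∧ GraphConvex G (Wside G v u))
    (b : V) :
    ∀ (n : ℕ) (x y : V), G.dist x y = n →
      (univ.filter fun S : WFam G b => decide (x ∈ S.1) ≠ decide (y ∈ S.1)).card = n := by
  intro n
  induction n with
  | zero =>
      intro x y h
      have hxy : x = y := (hc.dist_eq_zero_iff).mp h
      subst hxy
      simp
  | succ n ih =>
      intro x y hdist
      obtain ⟨z, hzy, hdxz⟩ := exists_penult hc hdist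
      have hxW : x ∈ Wside G z y := by
        show G.dist x z < G.dist x y
        omega
      have hzW : z ∈ Wside G z y := mem_wside_self hc hzy
      have hyW' : y ∈ Wside G y z := mem_wside_self hc hzy.symm
      have hyNW : y ∉ Wside G z y := wside_disj hyW'
      have hxNW' : x ∉ Wside G y z := wside_disj hxW
      have hzNW' : z ∉ Wside G y z := wside_disj hzW
      set S₀ : Set V := if b ∈ Wside G z y then Wside G z y else Wside G y z with hS₀def
      have hbS : b ∈ S₀ := by
        by_cases h : b ∈ Wside G z y
        · rw [hS₀def, if_pos h]; exact h
        · rw [hS₀def, if_neg h]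
          exact (wside_total hc hcol hzy b).resolve_left h
      have hedge : ∃ u v, G.Adj u v ∧ S₀ = Wside G u v := by
        by_cases h : b ∈ Wside G z y
        · exact ⟨z, y, hzy, by rw [hS₀def, if_pos h]⟩
        · exact ⟨y, z, hzy.symm, by rw [hS₀def, if_neg h]⟩
      set S₀I : WFam G b := ⟨S₀, hbS, hedge⟩ with hS₀I
      have hsep₀ : decide (z ∈ S₀) ≠ decide (y ∈ S₀) := by
        by_cases h : b ∈ Wside G z y
        · rw [hS₀def, if_pos h]; simp [hzW, hyNW]
        · rw [hS₀def, if_neg h]; simp [hzNW', hyW']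
      have e2 : ¬ (decide (x ∈ S₀) ≠ decide (z ∈ S₀)) := by
        by_cases h : b ∈ Wside G z y
        · rw [hS₀def, if_pos h]; simp [hxW, hzW]
        · rw [hS₀def, if_neg h]; simp [hxNW', hzNW']
      have e1 : ∀ S : WFam G b, (decide (z ∈ S.1) ≠ decide (y ∈ S.1)) ↔ S = S₀I := by
        intro S
        constructor
        · intro hsep
          obtain ⟨S, hbSm, u, v, huv, rfl⟩ := S
          rw [Ne, decide_eq_decide] at hsep
          apply Subtype.ext
          show Wside G u v = S₀
          by_cases hzm : z ∈ Wside G u v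
          · have hym : y ∉ Wside G u v := fun hy => hsep ⟨fun _ => hy, fun _ => hzm⟩
            have hk := key hc hcol hconv huv hzy hzm hym
            have hbW : b ∈ Wside G z y := hk ▸ hbSm
            rw [hk, hS₀def, if_pos hbW]
          · have hym : y ∈ Wside G u v := by
              by_contra hy
              exact hsep ⟨fun h => absurd h hzm, fun h => absurd h hy⟩
            have hk := key hc hcol hconv huv hzy.symm hym hzm
            have hbW : b ∈ Wside G y z := hk ▸ hbSm
            have hbn : b ∉ Wside G z y := wside_disj hbW
            rw [hk, hS₀def, if_neg hbn]
        · intro h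
          rw [h]
          exact hsep₀
      have hnotmem : S₀I ∉ (univ.filter fun S : WFam G b => decide (x ∈ S.1) ≠ decide (z ∈ S.1)) := by
        simp only [mem_filter, mem_univ, true_and]
        exact e2
      have hins : (univ.filter fun S : WFam G b => decide (x ∈ S.1) ≠ decide (y ∈ S.1))
          = insert S₀I (univ.filter fun S : WFam G b => decide (x ∈ S.1) ≠ decide (z ∈ S.1)) := by
        ext S
        simp only [mem_filter, mem_univ, true_and, mem_insert]
        by_cases hS : S = S₀I
        · subst hS
          have h1 : decide (z ∈ S₀I.1) ≠ decide (y ∈ S₀I.1) := (e1 S₀I).mpr rfl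
          have h2 : decide (x ∈ S₀I.1) = decide (z ∈ S₀I.1) := not_ne_iff.mp e2
          constructor
          · intro _; exact Or.inl rfl
          · intro _; rw [h2]; exact h1
        · have hzyeq : decide (z ∈ S.1) = decide (y ∈ S.1) :=
            not_ne_iff.mp (fun hh => hS ((e1 S).mp hh))
          rw [← hzyeq]
          constructor
          · intro h; exact Or.inr h
          · rintro (h | h)
            · exact absurd h hS
            · exact h
      rw [hins, card_insert_of_notMem hnotmem, ih x z hdxz]

private lemma conv_fwd {m : ℕ} (φ : V → Fin m → Bool)
    (hφ : ∀ u v : V, hDist (φ u) (φ v) = G.dist u v) {u v : V} (huv : G.Adj u v) :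
    GraphConvex G (Wside G u v) := by
  have h1 : hDist (φ u) (φ v) = 1 := by rw [hφ]; exact dist_eq_one_iff_adj.mpr huv
  obtain ⟨i, hi⟩ := Finset.card_eq_one.mp h1
  have hiu : φ u i ≠ φ v i := by
    have : i ∈ ({i} : Finset (Fin m)) := mem_singleton_self i
    rw [← hi] at this
    simpa using this
  have hoff : ∀ j, j ≠ i → φ u j = φ v j := by
    intro j hj
    by_contra hne
    have hmem : j ∈ univ.filter (fun k => φ u k ≠ φ v k) := by simp [hne]
    rw [hi, mem_singleton] at hmem
    exact hj hmem
  have hA : ∀ x : V, x ∈ Wside G u v ↔ φ x i = φ u i := by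
    intro x
    have herase : (univ.filter fun j => φ x j ≠ φ u j).erase i
        = (univ.filter fun j => φ x j ≠ φ v j).erase i := by
      ext j
      simp only [mem_erase, mem_filter, mem_univ, true_and]
      constructor
      · rintro ⟨hji, hj⟩; exact ⟨hji, by rw [← hoff j hji]; exact hj⟩
      · rintro ⟨hji, hj⟩; exact ⟨hji, by rw [hoff j hji]; exact hj⟩
    have hdu : G.dist x u = (univ.filter fun j => φ x j ≠ φ u j).card := (hφ x u).symm
    have hdv : G.dist x v = (univ.filter fun j => φ x j ≠ φ v j).card := (hφ x v).symm
    have hcard : ((univ.filter fun j => φ x j ≠ φ u j).erase i).card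
        = ((univ.filter fun j => φ x j ≠ φ v j).erase i).card := by rw [herase]
    by_cases hx : φ x i = φ u i
    · have hxv : φ x i ≠ φ v i := by rw [hx]; exact hiu
      have h2 : i ∉ (univ.filter fun j => φ x j ≠ φ u j) := by simp [hx]
      have h3 : i ∈ (univ.filter fun j => φ x j ≠ φ v j) := by simp [hxv]
      have e1 : (univ.filter fun j => φ x j ≠ φ u j).card
          = ((univ.filter fun j => φ x j ≠ φ u j).erase i).card := by
        rw [Finset.erase_eq_of_notMem h2]
      have e2 : ((univ.filter fun j => φ x j ≠ φ v j).erase i).card + 1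
          = (univ.filter fun j => φ x j ≠ φ v j).card := Finset.card_erase_add_one h3
      have : G.dist x u < G.dist x v := by rw [hdu, hdv]; omega
      exact ⟨fun _ => hx, fun _ => this⟩
    · have hxv : φ x i = φ v i := by
        cases hb : φ x i <;> cases hb2 : φ v i <;> cases hb3 : φ u i <;>
          simp_all
      have h2 : i ∈ (univ.filter fun j => φ x j ≠ φ u j) := by simp [hx]
      have h3 : i ∉ (univ.filter fun j => φ x j ≠ φ v j) := by simp [hxv]
      have e1 : ((univ.filter fun j => φ x j ≠ φ u j).erase i).card + 1
          = (univ.filter fun j => φ x j ≠ φ u j).card := Finset.card_erase_add_one h2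
      have e2 : (univ.filter fun j => φ x j ≠ φ v j).card
          = ((univ.filter fun j => φ x j ≠ φ v j).erase i).card := by
        rw [Finset.erase_eq_of_notMem h3]
      have hlt : G.dist x v < G.dist x u := by rw [hdu, hdv]; omega
      constructor
      · intro hmem
        exact absurd (show G.dist x u < G.dist x v from hmem) (by omega)
      · intro h; exact absurd h hx
  intro x hx y hy z hz
  rw [hA] at hx hy ⊢
  have hz' : hDist (φ x) (φ z) + hDist (φ z) (φ y) = hDist (φ x) (φ y) := by
    rw [hφ, hφ, hφ]; exact hz
  by_contra hzi
  have hzx : φ z i ≠ φ x i := fun h => hzi (h.trans hx)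
  have hzy2 : φ z i ≠ φ y i := fun h => hzi (h.trans hy)
  set A := univ.filter fun j => φ x j ≠ φ z j with hA'
  set B := univ.filter fun j => φ z j ≠ φ y j with hB'
  set C := univ.filter fun j => φ x j ≠ φ y j with hC'
  have hzsum : A.card + B.card = C.card := hz'
  have hCsub : insert i C ⊆ A ∪ B := by
    intro j hj
    rcases mem_insert.mp hj with rfl | hjC
    · exact mem_union_left _ (by simp [hA']; exact hzx.symm)
    · rw [hC', mem_filter] at hjC
      by_cases h : φ x j = φ z j
      · refine mem_union_right _ ?_
        rw [hB', mem_filter]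
        exact ⟨mem_univ _, by rw [← h]; exact hjC.2⟩
      · exact mem_union_left _ (by rw [hA', mem_filter]; exact ⟨mem_univ _, h⟩)
  have hiAB : i ∈ A ∩ B := by
    rw [mem_inter, hA', hB', mem_filter, mem_filter]
    exact ⟨⟨mem_univ _, hzx.symm⟩, ⟨mem_univ _, hzy2⟩⟩
  have hiC : i ∉ C := by
    rw [hC', mem_filter]
    rintro ⟨-, h⟩
    exact h (hx.trans hy.symm)
  have h1 : C.card + 1 ≤ (A ∪ B).card := by
    have := Finset.card_le_card hCsub
    rwa [Finset.card_insert_of_notMem hiC] at this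
  have h2 : (A ∪ B).card + (A ∩ B).card = A.card + B.card := Finset.card_union_add_card_inter A B
  have h3 : 1 ≤ (A ∩ B).card := Finset.card_pos.mpr ⟨i, hiAB⟩
  omega

private lemma bip_fwd [Fintype V] (hc : G.Connected) {m : ℕ} (φ : V → Fin m → Bool)
    (hφ : ∀ u v : V, hDist (φ u) (φ v) = G.dist u v) : G.Colorable 2 := by
  have hpar : ∀ x y : Fin m → Bool, (hDist x y : ZMod 2)
      = ((univ.filter fun i => x i = true).card : ZMod 2)
        + ((univ.filter fun i => y i = true).card : ZMod 2) := by
    intro x y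
    simp only [hDist]
    rw [Finset.card_filter, Finset.card_filter, Finset.card_filter,
      Nat.cast_sum, Nat.cast_sum, Nat.cast_sum, ← Finset.sum_add_distrib]
    refine Finset.sum_congr rfl fun i _ => ?_
    have h : ∀ a b : Bool, ((if a ≠ b then 1 else 0 : ℕ) : ZMod 2)
        = ((if a = true then 1 else 0 : ℕ) : ZMod 2)
          + ((if b = true then 1 else 0 : ℕ) : ZMod 2) := by decide
    exact h _ _
  refine ⟨SimpleGraph.Coloring.mk
    (fun v => (⟨(univ.filter fun i => φ v i = true).card % 2, Nat.mod_lt _ (by norm_num)⟩ : Fin 2))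
    ?_⟩
  intro a b hab h
  have hmod : (univ.filter fun i => φ a i = true).card % 2
      = (univ.filter fun i => φ b i = true).card % 2 := congrArg Fin.val h
  have hcast : ((univ.filter fun i => φ a i = true).card : ZMod 2)
      = ((univ.filter fun i => φ b i = true).card : ZMod 2) := by
    rw [← ZMod.natCast_mod _ 2, ← ZMod.natCast_mod ((univ.filter fun i => φ b i = true).card) 2,
      hmod]
  have hd1 : hDist (φ a) (φ b) = 1 := by
    rw [hφ]; exact SimpleGraph.dist_eq_one_iff_adj.mpr hab
  have := hpar (φ a) (φ b)
  rw [hd1, ← hcast] at this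
  have hcc : ∀ c : ZMod 2, c + c ≠ 1 := by decide
  exact hcc _ this.symm


end DjokovicAux

/-- **Djoković.** A finite connected graph `G` is a partial cube (admits an
isometric embedding into a hypercube) if and only if `G` is bipartite and for every edge
`uv` the sets `W(u,v)` and `W(v,u)` are convex. -/
theorem stmt3 [Fintype V] (G : SimpleGraph V) (hc : G.Connected) :
    (∃ (m : ℕ) (φ : V → (Fin m → Bool)), ∀ u v : V, hDist (φ u) (φ v) = G.dist u v) ↔
      (G.Colorable 2 ∧ ∀ u v : V, G.Adj u v →
        GraphConvex G (Wside G u v) ∧ GraphConvex G (Wside G v u)) := by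
  constructor
  · rintro ⟨m, φ, hφ⟩
    exact ⟨bip_fwd hc φ hφ, fun u v huv => ⟨conv_fwd φ hφ huv, conv_fwd φ hφ huv.symm⟩⟩
  · rintro ⟨hcol, hconv⟩
    have hne : Nonempty V := hc.nonempty
    obtain ⟨b⟩ := hne
    let e := Fintype.equivFin (WFam G b)
    refine ⟨Fintype.card (WFam G b), fun x j => decide (x ∈ (e.symm j).1), fun x y => ?_⟩
    have hcount := count_sep hc hcol hconv b (G.dist x y) x y rfl
    rw [← hcount]
    show (univ.filter fun j => decide (x ∈ (e.symm j).1) ≠ decide (y ∈ (e.symm j).1)).card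
      = (univ.filter fun S : WFam G b => decide (x ∈ S.1) ≠ decide (y ∈ S.1)).card
    apply Finset.card_bij (fun j _ => e.symm j)
    · intro j hj
      simp only [mem_filter, mem_univ, true_and] at hj ⊢
      exact hj
    · intro a₁ h₁ a₂ h₂ h
      exact e.symm.injective h
    · intro S hS
      refine ⟨e S, ?_, by simp⟩
      simp only [mem_filter, mem_univ, true_and] at hS ⊢
      simpa using hS
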